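/- Let S be a set and f : Set S → Set S monotone, with μ f its least fixpoint. Then there exists a well-ordering ≺ on μ f such that (μ f, ≺) is a support ordering for f, i.e. every x ∈ μ f satisfies x ∈ f({x' ∈ μ f | x' ≺ x}). -/

import Mathlib

/-- `(X, r)` is a support ordering for `f`. -/
def IsSupportOrdering {S : Type*} (f : Set S → Set S) (X : Set S) (r : S → S → Prop) : Prop :=
  ∀ x ∈ X, x ∈ f {x' ∈ X | r x' x}

/-- `r` is a well-ordering on the subset `X`: an irreflexive, transitive relation on `X`
in which any two distinct elements of `X` are comparable, and which is well-founded. -/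
def IsWellOrderingOn {S : Type*} (r : S → S → Prop) (X : Set S) : Prop :=
  (∀ x y, r x y → x ∈ X ∧ y ∈ X) ∧
  (∀ x, ¬ r x x) ∧ Transitive r ∧
  (∀ x ∈ X, ∀ y ∈ X, x ≠ y → r x y ∨ r y x) ∧
  WellFounded r

universe u

/-- Transfinite approximants of the least fixpoint. -/
noncomputable def approxLfp {S : Type u} (f : Set S → Set S) (α : Ordinal.{u}) : Set S :=
  f (⋃ β : {β : Ordinal.{u} // β < α}, approxLfp f β.1)
termination_by α
decreasing_by exact β.2

lemma approxLfp_def {S : Type u} (f : Set S → Set S) (α : Ordinal.{u}) :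
    approxLfp f α = f (⋃ β : {β : Ordinal.{u} // β < α}, approxLfp f β.1) := by
  rw [approxLfp]

lemma approxLfp_mono {S : Type u} {f : Set S → Set S} (hf : Monotone f)
    {α α' : Ordinal.{u}} (h : α ≤ α') : approxLfp f α ⊆ approxLfp f α' := by
  rw [approxLfp_def, approxLfp_def]
  exact hf (Set.iUnion_subset fun β =>
    Set.subset_iUnion_of_subset ⟨β.1, lt_of_lt_of_le β.2 h⟩ subset_rfl)

lemma approxLfp_subset_lfp {S : Type u} {f : Set S → Set S} (hf : Monotone f)
    (α : Ordinal.{u}) : approxLfp f α ⊆ OrderHom.lfp ⟨f, hf⟩ := by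
  induction α using Ordinal.induction with
  | h α ih =>
    rw [approxLfp_def]
    have h1 : f (⋃ β : {β : Ordinal.{u} // β < α}, approxLfp f β.1)
        ⊆ f (OrderHom.lfp ⟨f, hf⟩) :=
      hf (Set.iUnion_subset fun β => ih β.1 β.2)
    have h2 : f (OrderHom.lfp ⟨f, hf⟩) = OrderHom.lfp ⟨f, hf⟩ :=
      OrderHom.map_lfp ⟨f, hf⟩
    rw [h2] at h1
    exact h1

/-- The rank of an element: least stage at which it appears. -/
noncomputable def rankLfp {S : Type u} (f : Set S → Set S) (x : S) : Ordinal.{u} :=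
  sInf {α | x ∈ approxLfp f α}

lemma lfp_subset_approx {S : Type u} {f : Set S → Set S} (hf : Monotone f) :
    ∀ x ∈ OrderHom.lfp ⟨f, hf⟩, ∃ α, x ∈ approxLfp f α := by
  set M : Set S := {x | ∃ α : Ordinal.{u}, x ∈ approxLfp f α} with hM
  have hpre : f M ⊆ M := by
    intro x hx
    set σ : Ordinal.{u} := ⨆ y : M, rankLfp f y.1 with hσ
    have hMsub : M ⊆ approxLfp f σ := by
      intro y hy
      obtain ⟨α, hα⟩ := id hy
      have hne : {α | y ∈ approxLfp f α}.Nonempty := ⟨α, hα⟩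
      have hmem : y ∈ approxLfp f (rankLfp f y) := csInf_mem hne
      have hle : rankLfp f y ≤ σ := Ordinal.le_iSup (fun z : M => rankLfp f z.1) ⟨y, hy⟩
      exact approxLfp_mono hf hle hmem
    have : x ∈ approxLfp f (Order.succ σ) := by
      rw [approxLfp_def]
      refine hf ?_ (hf hMsub hx)
      exact Set.subset_iUnion_of_subset ⟨σ, Order.lt_succ σ⟩ subset_rfl
    exact ⟨Order.succ σ, this⟩
  have hle : OrderHom.lfp ⟨f, hf⟩ ≤ M := OrderHom.lfp_le ⟨f, hf⟩ hpre
  exact fun x hx => hle hx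

theorem lfp_wellOrdered_support {S : Type*} (f : Set S → Set S) (hf : Monotone f) :
    ∃ r : S → S → Prop,
      IsWellOrderingOn r (OrderHom.lfp ⟨f, hf⟩) ∧
      IsSupportOrdering f (OrderHom.lfp ⟨f, hf⟩) r := by
  classical
  set L : Set S := OrderHom.lfp ⟨f, hf⟩ with hL
  set lex : (Ordinal × S) → (Ordinal × S) → Prop :=
    Prod.Lex (· < ·) WellOrderingRel with hlex
  refine ⟨fun x y => x ∈ L ∧ y ∈ L ∧ lex (rankLfp f x, x) (rankLfp f y, y), ?_, ?_⟩
  · refine ⟨fun x y h => ⟨h.1, h.2.1⟩, ?_, ?_, ?_, ?_⟩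
    · rintro x ⟨-, -, h⟩
      rw [hlex, Prod.lex_def] at h
      rcases h with h | ⟨-, h⟩
      · exact lt_irrefl _ h
      · exact Std.Irrefl.irrefl (r := @WellOrderingRel S) x h
    · rintro a b c ⟨ha, -, hab⟩ ⟨-, hc, hbc⟩
      refine ⟨ha, hc, ?_⟩
      rw [hlex, Prod.lex_def] at *
      rcases hab with h1 | ⟨e1, h1⟩ <;> rcases hbc with h2 | ⟨e2, h2⟩
      · exact Or.inl (h1.trans h2)
      · exact Or.inl (e2 ▸ h1)
      · exact Or.inl (e1 ▸ h2)
      · exact Or.inr ⟨e1.trans e2, IsTrans.trans (r := @WellOrderingRel S) _ _ _ h1 h2⟩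
    · intro x hx y hy hne
      rcases lt_trichotomy (rankLfp f x) (rankLfp f y) with h | h | h
      · exact Or.inl ⟨hx, hy, Prod.Lex.left _ _ h⟩
      · rcases @trichotomous _ (@WellOrderingRel S) _ x y with h' | h' | h'
        · exact Or.inl ⟨hx, hy, h ▸ Prod.Lex.right _ h'⟩
        · exact absurd h' hne
        · exact Or.inr ⟨hy, hx, h ▸ Prod.Lex.right _ h'⟩
      · exact Or.inr ⟨hy, hx, Prod.Lex.left _ _ h⟩
    · refine Subrelation.wf (r := InvImage lex (fun x => (rankLfp f x, x))) ?_ ?_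
      · intro x y h; exact h.2.2
      · exact InvImage.wf _ (WellFounded.prod_lex Ordinal.lt_wf IsWellFounded.wf)
  · intro x hx
    obtain ⟨α, hα⟩ := lfp_subset_approx hf x hx
    have hmem : x ∈ approxLfp f (rankLfp f x) :=
      csInf_mem (s := {α | x ∈ approxLfp f α}) ⟨α, hα⟩
    rw [approxLfp_def] at hmem
    refine hf ?_ hmem
    rintro y hy
    simp only [Set.mem_iUnion] at hy
    obtain ⟨⟨β, hβ⟩, hyβ⟩ := hy
    have hyL : y ∈ L := approxLfp_subset_lfp hf β hyβ
    have hrank : rankLfp f y ≤ β := csInf_le (s := {α | y ∈ approxLfp f α}) (OrderBot.bddBelow _) hyβ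
    exact ⟨hyL, hyL, hx, Prod.Lex.left _ _ (lt_of_le_of_lt hrank hβ)⟩
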